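/- (Su calibrator.) Let α ∈ (0,1] and let ℓ ≥ 1 be a real number satisfying ℓ = 1 + log(ℓ/α) (this is the value ℓ_α = −w(−α/e), where w is the −1 branch of the Lambert W function). Let (Ω, 𝒜, P) be a probability space and let p be a nonnegative measurable random variable that is superuniform, i.e., P(p ≤ t) ≤ t for every t ∈ [0,1]. Then E_P[ 1 / max(ℓ·p, α) ] ≤ 1; in other words, x ↦ 1/max(ℓ·x, α) is a p-to-e calibrator. -/

import Mathlib

open MeasureTheory

/-- The Su calibrator: if ℓ ≥ 1 satisfies ℓ = 1 + log(ℓ/α) and p is a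
nonnegative superuniform random variable, then E[1/max(ℓ·p, α)] ≤ 1, i.e.
x ↦ 1/max(ℓ·x, α) is a p-to-e calibrator. -/
theorem statement_12 (α : ℝ) (hα : α ∈ Set.Ioc (0 : ℝ) 1)
    (ℓ : ℝ) (hℓ1 : 1 ≤ ℓ) (hℓ : ℓ = 1 + Real.log (ℓ / α))
    {Ω : Type*} [MeasurableSpace Ω] (P : Measure Ω) [IsProbabilityMeasure P]
    (p : Ω → ℝ) (hpmeas : Measurable p) (hp0 : ∀ ω, 0 ≤ p ω)
    (hsup : ∀ t : ℝ, 0 ≤ t → t ≤ 1 → P {ω | p ω ≤ t} ≤ ENNReal.ofReal t) :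
    ∫⁻ ω, ENNReal.ofReal (1 / max (ℓ * p ω) α) ∂P ≤ 1 := by
  have hα0 : 0 < α := hα.1
  have hα1 : α ≤ 1 := hα.2
  have hℓ0 : 0 < ℓ := lt_of_lt_of_le one_pos hℓ1
  have hlog : Real.log (ℓ / α) = ℓ - 1 := by linarith
  set m : ℝ := ℓ⁻¹ with hm
  set c : ℝ := α⁻¹ with hc
  have hm0 : 0 < m := inv_pos.mpr hℓ0
  have hc0 : 0 < c := inv_pos.mpr hα0
  have hαℓ : α ≤ ℓ := le_trans hα1 hℓ1
  have hmc : m ≤ c := by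
    rw [hm, hc]
    exact inv_anti₀ hα0 hαℓ
  set f : Ω → ℝ := fun ω => 1 / max (ℓ * p ω) α with hf
  have hmaxpos : ∀ ω, 0 < max (ℓ * p ω) α := fun ω => lt_max_of_lt_right hα0
  have hfmeas : Measurable f :=
    measurable_const.div ((measurable_const.mul hpmeas).max measurable_const)
  have hfnn : 0 ≤ᵐ[P] f :=
    Filter.Eventually.of_forall fun ω => by positivity
  rw [lintegral_eq_lintegral_meas_lt P hfnn hfmeas.aemeasurable]
  have hsplit : Set.Ioi (0:ℝ) = Set.Ioc 0 m ∪ (Set.Ioc m c ∪ Set.Ioi c) := by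
    ext t
    simp only [Set.mem_Ioi, Set.mem_union, Set.mem_Ioc]
    constructor
    · intro ht
      rcases le_or_gt t m with h1 | h1
      · exact Or.inl ⟨ht, h1⟩
      · rcases le_or_gt t c with h2 | h2
        · exact Or.inr (Or.inl ⟨h1, h2⟩)
        · exact Or.inr (Or.inr h2)
    · rintro (⟨h, _⟩ | (⟨h, _⟩ | h)) <;> linarith
  rw [hsplit, lintegral_union (measurableSet_Ioc.union measurableSet_Ioi) ?hdisj,
    lintegral_union measurableSet_Ioi ?hdisj2]
  case hdisj =>
    rw [Set.disjoint_union_right]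
    constructor
    · rw [Set.disjoint_left]
      intro t ht ht'
      exact absurd ht'.1 (not_lt.mpr ht.2)
    · rw [Set.disjoint_left]
      intro t ht ht'
      simp only [Set.mem_Ioc] at ht
      simp only [Set.mem_Ioi] at ht'
      linarith
  case hdisj2 =>
    rw [Set.disjoint_left]
    intro t ht ht'
    simp only [Set.mem_Ioc] at ht
    simp only [Set.mem_Ioi] at ht'
    linarith
  -- first piece
  have hA : ∫⁻ t in Set.Ioc (0:ℝ) m, P {a | t < f a} ≤ ENNReal.ofReal m := by
    calc ∫⁻ t in Set.Ioc (0:ℝ) m, P {a | t < f a}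
        ≤ ∫⁻ _ in Set.Ioc (0:ℝ) m, 1 :=
          lintegral_mono fun t => prob_le_one
      _ = ENNReal.ofReal m := by
          rw [setLIntegral_one, Real.volume_Ioc, sub_zero]
  -- third piece
  have hC : ∫⁻ t in Set.Ioi c, P {a | t < f a} = 0 := by
    have hzero : ∀ t ∈ Set.Ioi c, P {a | t < f a} = 0 := by
      intro t ht
      have hempty : {a | t < f a} = ∅ := by
        ext a
        simp only [Set.mem_setOf_eq, Set.mem_empty_iff_false, iff_false, not_lt]
        have h1 : f a ≤ c := by
          rw [hf, hc]
          simp only [one_div]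
          exact inv_anti₀ hα0 (le_max_right _ _)
        exact le_trans h1 (le_of_lt ht)
      rw [hempty, measure_empty]
    calc ∫⁻ t in Set.Ioi c, P {a | t < f a}
        = ∫⁻ _ in Set.Ioi c, 0 :=
          setLIntegral_congr_fun measurableSet_Ioi hzero
      _ = 0 := by simp
  -- second piece
  have hB : ∫⁻ t in Set.Ioc m c, P {a | t < f a}
      ≤ ENNReal.ofReal (ℓ⁻¹ * (ℓ - 1)) := by
    have hbound : ∀ t ∈ Set.Ioc m c, P {a | t < f a} ≤ ENNReal.ofReal ((ℓ * t)⁻¹) := by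
      intro t ht
      obtain ⟨htm, htc⟩ := ht
      have ht0 : 0 < t := lt_of_le_of_lt hm0.le htm
      have hℓt1 : 1 < ℓ * t := by
        have h := (inv_lt_iff_one_lt_mul₀ hℓ0).mp htm
        linarith [h]
      have hsub : {a | t < f a} ⊆ {ω | p ω ≤ (ℓ * t)⁻¹} := by
        intro a ha
        simp only [Set.mem_setOf_eq] at ha ⊢
        have h1 : max (ℓ * p a) α < t⁻¹ := by
          rw [hf] at ha
          simp only [one_div] at ha
          exact (lt_inv_comm₀ ht0 (hmaxpos a)).mp ha
        have h2 : ℓ * p a < t⁻¹ := lt_of_le_of_lt (le_max_left _ _) h1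
        have h3 : p a < ℓ⁻¹ * t⁻¹ := by
          have := mul_lt_mul_of_pos_left h2 (inv_pos.mpr hℓ0)
          calc p a = ℓ⁻¹ * (ℓ * p a) := by field_simp
            _ < ℓ⁻¹ * t⁻¹ := this
        rw [mul_inv]
        exact h3.le
      calc P {a | t < f a} ≤ P {ω | p ω ≤ (ℓ * t)⁻¹} := measure_mono hsub
        _ ≤ ENNReal.ofReal ((ℓ * t)⁻¹) :=
            hsup _ (by positivity) (by
              rw [inv_le_one_iff₀]
              right; exact hℓt1.le)
    have hmble : Measurable fun t : ℝ => ENNReal.ofReal ((ℓ * t)⁻¹) :=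
      (measurable_const.mul measurable_id).inv.ennreal_ofReal
    calc ∫⁻ t in Set.Ioc m c, P {a | t < f a}
        ≤ ∫⁻ t in Set.Ioc m c, ENNReal.ofReal ((ℓ * t)⁻¹) :=
          setLIntegral_mono hmble hbound
      _ = ENNReal.ofReal (∫ t in Set.Ioc m c, (ℓ * t)⁻¹) := by
          rw [← ofReal_integral_eq_lintegral_ofReal]
          · apply ((ContinuousOn.integrableOn_Icc ?_).mono_set Set.Ioc_subset_Icc_self)
            apply ContinuousOn.inv₀
            · exact (continuous_const.mul continuous_id).continuousOn
            · intro x hx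
              have : 0 < x := lt_of_lt_of_le hm0 hx.1
              positivity
          · rw [Filter.EventuallyLE, ae_restrict_iff' measurableSet_Ioc]
            apply Filter.Eventually.of_forall
            intro t ht
            have : 0 < t := lt_of_lt_of_le hm0 ht.1.le
            positivity
      _ = ENNReal.ofReal (ℓ⁻¹ * (ℓ - 1)) := by
          congr 1
          have heq : ∀ t : ℝ, (ℓ * t)⁻¹ = ℓ⁻¹ * t⁻¹ := fun t => by rw [mul_inv]
          simp_rw [heq]
          rw [← intervalIntegral.integral_of_le hmc,
            intervalIntegral.integral_const_mul, integral_inv]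
          · have hcm : c / m = ℓ / α := by
              rw [hc, hm]
              field_simp
            rw [hcm, hlog]
          · intro h
            have := Set.mem_uIcc.mp h
            rcases this with ⟨h1, _⟩ | ⟨h1, _⟩ <;> linarith
  calc (∫⁻ t in Set.Ioc (0:ℝ) m, P {a | t < f a})
        + ((∫⁻ t in Set.Ioc m c, P {a | t < f a}) + ∫⁻ t in Set.Ioi c, P {a | t < f a})
      ≤ ENNReal.ofReal m + (ENNReal.ofReal (ℓ⁻¹ * (ℓ - 1)) + 0) := by
        gcongr
        exact le_of_eq hC
    _ = ENNReal.ofReal (ℓ⁻¹ + ℓ⁻¹ * (ℓ - 1)) := by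
        rw [add_zero, ← ENNReal.ofReal_add (by positivity) (by nlinarith [inv_pos.mpr hℓ0])]
    _ = 1 := by
        have h1 : ℓ⁻¹ + ℓ⁻¹ * (ℓ - 1) = 1 := by field_simp; ring
        rw [h1, ENNReal.ofReal_one]
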